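/- Under the setup of the previous identity (K ≥ 2, π_k ∈ (0,1) with ∑_k π_k = 1, p_k ∈ (0,1], ã = (π_2 p_2,…,π_K p_K)ᵀ, p̃ = (p_2,…,p_K)ᵀ, M₁₁ = P̃ − (I−P̃)Ã − p̃ ãᵀ with P̃ = diag(p̃), Ã = diag(ã)), for each index k ∈ {2,…,K}, the k-th entry of the row vector ãᵀ M₁₁^{-1} equals π_k / ( ( 1 − (1−p_k) π_k ) · ( 1 − ∑_{ℓ≠1} π_ℓ p_ℓ / ( 1 − (1−p_ℓ) π_ℓ ) ) ). -/

import Mathlib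

open Finset Matrix

/-- **Entries of the row vector `ãᵀ M₁₁⁻¹` (proof of Theorem 4).**
Agents are indexed by `Fin (n+1)` (so `K = n + 1 ≥ 2`) with the intervened agent `1`
at index `0`; the reduced index set `{2,…,K}` is realized as `Fin n` via `Fin.succ`.
With `ã = (π_k p_k)_{k≠1}`, `p̃ = (p_k)_{k≠1}` and
`M₁₁ = P̃ − (I − P̃)Ã − p̃ ãᵀ`, for each `k ∈ {2,…,K}` the `k`-th entry of `ãᵀ M₁₁⁻¹`
equals `π_k / ((1 − (1−p_k) π_k) (1 − ∑_{ℓ≠1} π_ℓ p_ℓ / (1 − (1−p_ℓ) π_ℓ)))`. -/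
private lemma aux1 (a dd s : ℝ) (hd : dd ≠ 0) (hs : s ≠ 0) :
    a * dd⁻¹ + (1 - s) * (a / (dd * s)) = a / (dd * s) := by
  field_simp
  ring

private lemma aux2 (a q dd s : ℝ) (hd : dd ≠ 0) (hs : s ≠ 0) :
    dd * ((dd)⁻¹ + q * a / (dd * dd * s)) - q * (a / (dd * s)) = 1 := by
  field_simp
  ring

private lemma aux3 (a q di dj s : ℝ) (hdi : di ≠ 0) :
    di * (0 + q * a / (di * dj * s)) - q * (a / (dj * s)) = 0 := by
  rcases eq_or_ne dj 0 with h | h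
  · simp [h]
  rcases eq_or_ne s 0 with h' | h'
  · simp [h']
  field_simp
  ring

private lemma aux4 (a q e s : ℝ) (hq : q ≠ 0) :
    a * q / (q * e * s) = a / (e * s) := by
  rw [mul_assoc, mul_comm a q, mul_div_mul_left _ _ hq]

theorem row_vector_entries_M11_inv
    {n : ℕ} (hn : 1 ≤ n)
    (π p : Fin (n + 1) → ℝ)
    (hπ : ∀ k, π k ∈ Set.Ioo (0 : ℝ) 1) (hπsum : ∑ k, π k = 1)
    (hp : ∀ k, p k ∈ Set.Ioc (0 : ℝ) 1)
    (at' pt : Fin n → ℝ)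
    (hat : ∀ j : Fin n, at' j = π j.succ * p j.succ)
    (hpt : ∀ j : Fin n, pt j = p j.succ)
    (M11 : Matrix (Fin n) (Fin n) ℝ)
    (hM11 : M11 = Matrix.diagonal pt - (1 - Matrix.diagonal pt) * Matrix.diagonal at'
      - Matrix.vecMulVec pt at') :
    ∀ j : Fin n, Matrix.vecMul at' M11⁻¹ j =
      π j.succ / ((1 - (1 - p j.succ) * π j.succ) *
        (1 - ∑ l : Fin n, π l.succ * p l.succ / (1 - (1 - p l.succ) * π l.succ))) := by
  -- positivity facts
  have hepos : ∀ j : Fin n, 0 < 1 - (1 - p j.succ) * π j.succ := by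
    intro j
    nlinarith [(hπ j.succ).1, (hπ j.succ).2, (hp j.succ).1, (hp j.succ).2]
  have hpne : ∀ j : Fin n, p j.succ ≠ 0 := fun j => ne_of_gt (hp j.succ).1
  have hene : ∀ j : Fin n, (1 - (1 - p j.succ) * π j.succ) ≠ 0 :=
    fun j => ne_of_gt (hepos j)
  set S : ℝ := 1 - ∑ l : Fin n, π l.succ * p l.succ / (1 - (1 - p l.succ) * π l.succ)
    with hSdef
  have hSpos : 0 < S := by
    have h1 : ∑ l : Fin n, π l.succ * p l.succ / (1 - (1 - p l.succ) * π l.succ)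
        ≤ ∑ l : Fin n, π l.succ := by
      refine Finset.sum_le_sum fun l _ => ?_
      rw [div_le_iff₀ (hepos l)]
      nlinarith [mul_nonneg (mul_nonneg (le_of_lt (hπ l.succ).1)
        (sub_nonneg.2 (hp l.succ).2)) (sub_nonneg.2 (le_of_lt (hπ l.succ).2))]
    have h2 : π 0 + ∑ l : Fin n, π l.succ = 1 := by
      rw [← Fin.sum_univ_succ]; exact hπsum
    have h3 := (hπ 0).1
    rw [hSdef]; linarith
  have hSne : S ≠ 0 := ne_of_gt hSpos
  -- abbreviations
  set d : Fin n → ℝ := fun j => p j.succ * (1 - (1 - p j.succ) * π j.succ) with hddef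
  have hdne : ∀ j, d j ≠ 0 := fun j => mul_ne_zero (hpne j) (hene j)
  set A : Fin n → ℝ := fun j => π j.succ * p j.succ with hAdef
  -- entries of M11
  have hMe : ∀ i j, M11 i j = (if i = j then d i else 0) - p i.succ * A j := by
    intro i j
    rw [hM11]
    simp only [Matrix.sub_apply, Matrix.mul_apply, Matrix.diagonal_apply,
      Matrix.one_apply, Matrix.vecMulVec_apply, hat, hpt, hAdef, hddef]
    by_cases h : i = j
    · subst h
      simp [Finset.sum_ite_eq]
      ring
    · simp [h, Finset.sum_ite_eq, Ne.symm h]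
  -- the explicit inverse
  set N : Matrix (Fin n) (Fin n) ℝ := Matrix.of (fun i j =>
    (if i = j then (d i)⁻¹ else 0) + p i.succ * A j / (d i * d j * S)) with hNdef
  have hNe : ∀ i j, N i j = (if i = j then (d i)⁻¹ else 0) + p i.succ * A j / (d i * d j * S) :=
    fun i j => rfl
  -- key sum
  have hT : ∑ k : Fin n, A k * p k.succ / d k = 1 - S := by
    rw [hSdef, sub_sub_cancel]
    refine Finset.sum_congr rfl fun k _ => ?_
    simp only [hAdef, hddef]
    rw [show π k.succ * p k.succ * p k.succ = p k.succ * (π k.succ * p k.succ) by ring,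
      mul_div_mul_left _ _ (hpne k)]
  -- column sums of N against A
  have hcol : ∀ j, ∑ k : Fin n, A k * N k j = A j / (d j * S) := by
    intro j
    have : ∀ k : Fin n, A k * N k j =
        (if k = j then A j * (d j)⁻¹ else 0) + (A k * p k.succ / d k) * (A j / (d j * S)) := by
      intro k
      rw [hNe]
      by_cases h : k = j
      · subst h
        simp only [eq_self_iff_true, if_true]
        field_simp
      · simp only [h, if_false]
        field_simp
        ring
    rw [Finset.sum_congr rfl fun k _ => this k, Finset.sum_add_distrib,
      Finset.sum_ite_eq', ← Finset.sum_mul, hT]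
    simp only [Finset.mem_univ, if_true]
    exact aux1 (A j) (d j) S (hdne j) hSne
  -- M11 * N = 1
  have hMN : M11 * N = 1 := by
    ext i j
    rw [Matrix.mul_apply]
    have hsplit : ∀ k : Fin n, M11 i k * N k j =
        (if k = i then d i * N i j else 0) - p i.succ * (A k * N k j) := by
      intro k
      rw [hMe]
      by_cases h : i = k
      · subst h; simp; ring
      · simp [h, Ne.symm h]; ring
    rw [Finset.sum_congr rfl fun k _ => hsplit k, Finset.sum_sub_distrib,
      Finset.sum_ite_eq', ← Finset.mul_sum, hcol]
    simp only [Finset.mem_univ, if_true, Matrix.one_apply]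
    rw [hNe]
    by_cases h : i = j
    · subst h
      simp only [if_pos rfl]
      exact aux2 (A i) (p i.succ) (d i) S (hdne i) hSne
    · simp only [h, if_false]
      exact aux3 (A j) (p i.succ) (d i) (d j) S (hdne i)
  -- conclude
  have hinv : M11⁻¹ = N := Matrix.inv_eq_right_inv hMN
  intro j
  rw [hinv]
  have : Matrix.vecMul at' N j = ∑ k : Fin n, A k * N k j := by
    simp only [Matrix.vecMul, dotProduct]
    exact Finset.sum_congr rfl fun k _ => by rw [hat k, hAdef]
  rw [this, hcol, hAdef, hddef]
  exact aux4 (π j.succ) (p j.succ) (1 - (1 - p j.succ) * π j.succ) S (hpne j)
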